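/- Let M ∈ R^{p×p} be a full-rank matrix over an Ore domain R, and U_* ∈ R_*^{ℓ×p} a matrix with U_* M_* = G, a Gröbner basis matrix of the row module. Select rows t_1,...,t_p of U_* so that the corresponding rows of U_*M_* form a generating set B of the R-row-module of M, with B a square matrix of full rank. Then U = [rows t_1,...,t_p of U_*] is invertible over R (i.e., there exists V ∈ R^{p×p} with VU = UV = Id). -/
import Mathlib


/-- Let `R` be a Noetherian Ore domain, `M_* ∈ R^{p×p}` a full-rank matrix (its
rows are left linearly independent), and `U_* ∈ R^{ℓ×p}` with `U_* M_*` a Gröbner basis matrix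
of the row module.  Select row indices `t₁,…,t_p` such that the corresponding rows
`B = (U_* M_*).submatrix t id` form a square full-rank matrix whose rows generate the same left
row module as the rows of `M_*`.  Then `U := U_*.submatrix t id` is invertible over `R`: there
is `V` with `V·U = U·V = 1`. -/
theorem selected_transformation_matrix_invertible
    {R : Type*} [Ring R] [IsDomain R] [IsNoetherianRing R] {l p : ℕ}
    (Ustar : Matrix (Fin l) (Fin p) R) (Mstar : Matrix (Fin p) (Fin p) R)
    (t : Fin p → Fin l)
    (hrankM : ∀ v : Fin p → R, Matrix.vecMul v Mstar = 0 → v = 0)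
    (hrankB : ∀ v : Fin p → R, Matrix.vecMul v ((Ustar * Mstar).submatrix t id) = 0 → v = 0)
    (hgen : Submodule.span R (Set.range fun i => (Ustar * Mstar).submatrix t id i)
        = Submodule.span R (Set.range fun i => Mstar i)) :
    ∃ V : Matrix (Fin p) (Fin p) R,
      V * Ustar.submatrix t id = 1 ∧ Ustar.submatrix t id * V = 1 := by
  set U := Ustar.submatrix t id with hU
  set B := (Ustar * Mstar).submatrix t id with hB
  have hBU : B = U * Mstar := by
    ext i j
    simp [hB, hU, Matrix.mul_apply]
  -- every row of Mstar is a combination of rows of B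
  have hmem : ∀ i, Mstar i ∈ Submodule.span R (Set.range fun j => B j) := by
    rw [hgen]
    exact fun i => Submodule.subset_span ⟨i, rfl⟩
  have hex : ∀ i, ∃ c : Fin p → R, ∑ j, c j • B j = Mstar i := by
    intro i
    exact (Submodule.mem_span_range_iff_exists_fun R).mp (hmem i)
  choose c hc using hex
  refine ⟨Matrix.of c, ?_, ?_⟩
  · -- V * U = 1
    have hVB : Matrix.of c * B = Mstar := by
      ext i k
      have := congrFun (hc i) k
      simpa [Matrix.mul_apply, Finset.sum_apply] using this
    have hzero : (Matrix.of c * U - 1) * Mstar = 0 := by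
      rw [sub_mul, one_mul, Matrix.mul_assoc, ← hBU, hVB, sub_self]
    have hrow : ∀ i, (Matrix.of c * U - 1) i = 0 := by
      intro i
      apply hrankM
      ext k
      have := congrFun (congrFun hzero i) k
      simpa [Matrix.mul_apply, Matrix.vecMul, dotProduct] using this
    have : Matrix.of c * U - 1 = 0 := by
      ext i j
      exact congrFun (hrow i) j
    exact sub_eq_zero.mp this
  · -- U * V = 1
    have hVB : Matrix.of c * B = Mstar := by
      ext i k
      have := congrFun (hc i) k
      simpa [Matrix.mul_apply, Finset.sum_apply] using this
    have hzero : (U * Matrix.of c - 1) * B = 0 := by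
      rw [sub_mul, one_mul, Matrix.mul_assoc, hVB, ← hBU, sub_self]
    have hrow : ∀ i, (U * Matrix.of c - 1) i = 0 := by
      intro i
      apply hrankB
      ext k
      have := congrFun (congrFun hzero i) k
      simpa [hB, Matrix.mul_apply, Matrix.vecMul, dotProduct] using this
    have h0 : U * Matrix.of c - 1 = 0 := by
      ext i j
      exact congrFun (hrow i) j
    exact sub_eq_zero.mp h0
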